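/- Condition A for the potential: for every player i and every configuration S_{-i} of all coordinates other than a_i, the potential satisfies Φ(a_i = 1, S_{-i}) − Φ(a_i = 0, S_{-i}) = u_i(a_i = 1, S_{-i}) − u_i(a_i = 0, S_{-i}); explicitly, both sides equal v_i + h Σ_{j≠i} a_j + φ Σ_{j≠i} g_{ij} g_{ji} a_j. -/

import Mathlib

open Finset

noncomputable section

/-- A network state: the diagonal entry `S i i` is player `i`'s action status `a_i`,
and the off-diagonal entry `S i j` (for `i ≠ j`) is the link status `g_{ij}`. -/
abbrev NetState (n : ℕ) := Fin n → Fin n → Bool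

/-- Numerical (0/1) value of a Boolean coordinate. -/
def bv (x : Bool) : ℝ := if x then 1 else 0

/-- Player `i`'s payoff
`u_i(S) = a_i v_i + h a_i Σ_{j≠i} a_j + φ a_i Σ_{j≠i} g_{ij} g_{ji} a_j
  + Σ_{j≠i} g_{ij} w_{ij} + m Σ_{j≠i} g_{ij} g_{ji}
  + q Σ_{j,l pairwise distinct from each other and from i} g_{ij} g_{jl} g_{li}`. -/
def payoff (n : ℕ) (v : Fin n → ℝ) (w : Fin n → Fin n → ℝ) (h φ m q : ℝ)
    (S : NetState n) (i : Fin n) : ℝ :=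
  bv (S i i) * v i
    + h * bv (S i i) * ∑ j ∈ univ.filter (fun j => j ≠ i), bv (S j j)
    + φ * bv (S i i) * ∑ j ∈ univ.filter (fun j => j ≠ i), bv (S i j) * bv (S j i) * bv (S j j)
    + ∑ j ∈ univ.filter (fun j => j ≠ i), bv (S i j) * w i j
    + m * ∑ j ∈ univ.filter (fun j => j ≠ i), bv (S i j) * bv (S j i)
    + q * ∑ j ∈ univ.filter (fun j => j ≠ i),
        ∑ l ∈ univ.filter (fun l => l ≠ i ∧ l ≠ j),
          bv (S i j) * bv (S j l) * bv (S l i)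

/-- The potential
`Φ(S) = Σ_i a_i v_i + (h/2) Σ_{i≠j} a_i a_j + (φ/2) Σ_{i≠j} a_i a_j g_{ij} g_{ji}
  + Σ_{i≠j} g_{ij} w_{ij} + (m/2) Σ_{i≠j} g_{ij} g_{ji}
  + (q/3) Σ_{i,j,l pairwise distinct} g_{ij} g_{jl} g_{li}`. -/
def potential (n : ℕ) (v : Fin n → ℝ) (w : Fin n → Fin n → ℝ) (h φ m q : ℝ)
    (S : NetState n) : ℝ :=
  (∑ i, bv (S i i) * v i)
    + (h / 2) * ∑ i, ∑ j ∈ univ.filter (fun j => j ≠ i), bv (S i i) * bv (S j j)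
    + (φ / 2) * ∑ i, ∑ j ∈ univ.filter (fun j => j ≠ i),
        bv (S i i) * bv (S j j) * bv (S i j) * bv (S j i)
    + (∑ i, ∑ j ∈ univ.filter (fun j => j ≠ i), bv (S i j) * w i j)
    + (m / 2) * ∑ i, ∑ j ∈ univ.filter (fun j => j ≠ i), bv (S i j) * bv (S j i)
    + (q / 3) * ∑ i, ∑ j ∈ univ.filter (fun j => j ≠ i),
        ∑ l ∈ univ.filter (fun l => l ≠ i ∧ l ≠ j), bv (S i j) * bv (S j l) * bv (S l i)

/-- Auxiliary: difference of symmetric off-diagonal double sums concentrates on row/column `i`. -/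
lemma double_sum_diff (n : ℕ) (i : Fin n) (F F' : Fin n → Fin n → ℝ)
    (hsym' : ∀ x j, F' x j = F' j x) (hsym : ∀ x j, F x j = F j x)
    (hag : ∀ x j, x ≠ i → j ≠ i → F' x j = F x j) :
    (∑ x, ∑ j ∈ univ.filter (fun j => j ≠ x), F' x j)
      - (∑ x, ∑ j ∈ univ.filter (fun j => j ≠ x), F x j)
    = 2 * ∑ j ∈ univ.filter (fun j => j ≠ i), (F' i j - F i j) := by
  rw [← Finset.sum_sub_distrib]
  have key : ∀ x : Fin n,
      (∑ j ∈ univ.filter (fun j => j ≠ x), F' x j)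
        - (∑ j ∈ univ.filter (fun j => j ≠ x), F x j)
      = ∑ j ∈ univ.filter (fun j => j ≠ x), (F' x j - F x j) :=
    fun x => (Finset.sum_sub_distrib _ _).symm
  simp only [key]
  have hzero : ∀ x j : Fin n, x ≠ i → j ≠ i → F' x j - F x j = 0 := by
    intro x j hx hj; rw [hag x j hx hj]; ring
  rw [← Finset.add_sum_erase _
        (fun x => ∑ j ∈ univ.filter (fun j => j ≠ x), (F' x j - F x j)) (Finset.mem_univ i)]
  have h2 : ∑ x ∈ univ.erase i, ∑ j ∈ univ.filter (fun j => j ≠ x), (F' x j - F x j)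
      = ∑ j ∈ univ.filter (fun j => j ≠ i), (F' i j - F i j) := by
    rw [← Finset.filter_ne']
    apply Finset.sum_congr rfl
    intro x hx
    simp only [Finset.mem_filter] at hx
    have hin : i ∈ univ.filter (fun j => j ≠ x) := by
      simp [Ne.symm hx.2]
    rw [Finset.sum_eq_single_of_mem i hin]
    · rw [hsym' x i, hsym x i]
    · intro j hj hji
      have hjx : j ≠ x := (Finset.mem_filter.mp hj).2
      exact hzero x j hx.2 hji
  rw [h2]; ring

/-- **Condition A for the potential.** For every player `i` and every configuration of all
coordinates other than `a_i`, flipping `a_i` from `0` to `1` changes the potential by exactly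
the change in `i`'s payoff, and both changes equal
`v_i + h Σ_{j≠i} a_j + φ Σ_{j≠i} g_{ij} g_{ji} a_j`. -/
theorem condition_A (n : ℕ) (hn : 2 ≤ n) (v : Fin n → ℝ) (w : Fin n → Fin n → ℝ)
    (h φ m q : ℝ) (i : Fin n) (S S' : NetState n)
    (hS : S i i = false) (hS' : S' i i = true)
    (hagree : ∀ x y : Fin n, ¬(x = i ∧ y = i) → S' x y = S x y) :
    potential n v w h φ m q S' - potential n v w h φ m q S
        = payoff n v w h φ m q S' i - payoff n v w h φ m q S i
      ∧ potential n v w h φ m q S' - potential n v w h φ m q S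
        = v i + h * (∑ j ∈ univ.filter (fun j => j ≠ i), bv (S j j))
            + φ * (∑ j ∈ univ.filter (fun j => j ≠ i), bv (S i j) * bv (S j i) * bv (S j j)) := by

  -- basic agreement facts
  have hx : ∀ x y : Fin n, x ≠ i → S' x y = S x y := fun x y hxi => hagree x y (by tauto)
  have hy : ∀ x y : Fin n, y ≠ i → S' x y = S x y := fun x y hyi => hagree x y (by tauto)
  have hoff : ∀ x j : Fin n, j ≠ x → S' x j = S x j := by
    intro x j hne
    by_cases hxi : x = i
    · subst hxi; exact hy x j hne
    · exact hx x j hxi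
  set A := ∑ j ∈ univ.filter (fun j => j ≠ i), bv (S j j) with hA
  set B := ∑ j ∈ univ.filter (fun j => j ≠ i), bv (S i j) * bv (S j i) * bv (S j j) with hB
  have hpay : payoff n v w h φ m q S' i - payoff n v w h φ m q S i = v i + h * A + φ * B := by
    unfold payoff
    rw [hS, hS']
    have e1 : ∑ j ∈ univ.filter (fun j => j ≠ i), bv (S' j j) = A := by
      apply Finset.sum_congr rfl
      intro j hj
      rw [hx j j (Finset.mem_filter.mp hj).2]
    have e2 : ∑ j ∈ univ.filter (fun j => j ≠ i), bv (S' i j) * bv (S' j i) * bv (S' j j) = B := by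
      apply Finset.sum_congr rfl
      intro j hj
      have hji := (Finset.mem_filter.mp hj).2
      rw [hy i j hji, hx j i hji, hx j j hji]
    have e3 : ∑ j ∈ univ.filter (fun j => j ≠ i), bv (S' i j) * w i j
        = ∑ j ∈ univ.filter (fun j => j ≠ i), bv (S i j) * w i j := by
      apply Finset.sum_congr rfl
      intro j hj
      rw [hy i j (Finset.mem_filter.mp hj).2]
    have e4 : ∑ j ∈ univ.filter (fun j => j ≠ i), bv (S' i j) * bv (S' j i)
        = ∑ j ∈ univ.filter (fun j => j ≠ i), bv (S i j) * bv (S j i) := by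
      apply Finset.sum_congr rfl
      intro j hj
      have hji := (Finset.mem_filter.mp hj).2
      rw [hy i j hji, hx j i hji]
    have e5 : (∑ j ∈ univ.filter (fun j => j ≠ i), ∑ l ∈ univ.filter (fun l => l ≠ i ∧ l ≠ j),
          bv (S' i j) * bv (S' j l) * bv (S' l i))
        = ∑ j ∈ univ.filter (fun j => j ≠ i), ∑ l ∈ univ.filter (fun l => l ≠ i ∧ l ≠ j),
          bv (S i j) * bv (S j l) * bv (S l i) := by
      apply Finset.sum_congr rfl
      intro j hj
      have hji := (Finset.mem_filter.mp hj).2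
      apply Finset.sum_congr rfl
      intro l hl
      have hli := ((Finset.mem_filter.mp hl).2).1
      rw [hy i j hji, hx j l hji, hx l i hli]
    rw [e1, e2, e3, e4, e5]
    simp only [show bv true = (1:ℝ) from rfl, show bv false = (0:ℝ) from rfl]
    ring
  have hpot : potential n v w h φ m q S' - potential n v w h φ m q S = v i + h * A + φ * B := by
    unfold potential
    have t1 : (∑ x, bv (S' x x) * v x) = (∑ x, bv (S x x) * v x) + v i := by
      rw [← Finset.add_sum_erase _ (fun x => bv (S' x x) * v x) (Finset.mem_univ i),
          ← Finset.add_sum_erase _ (fun x => bv (S x x) * v x) (Finset.mem_univ i),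
          hS, hS']
      have : ∑ x ∈ univ.erase i, bv (S' x x) * v x = ∑ x ∈ univ.erase i, bv (S x x) * v x := by
        apply Finset.sum_congr rfl
        intro x hxm
        rw [hx x x (Finset.ne_of_mem_erase hxm)]
      rw [this]
      simp only [show bv true = (1:ℝ) from rfl, show bv false = (0:ℝ) from rfl]
      ring
    have t2 : (∑ x, ∑ j ∈ univ.filter (fun j => j ≠ x), bv (S' x x) * bv (S' j j))
        - (∑ x, ∑ j ∈ univ.filter (fun j => j ≠ x), bv (S x x) * bv (S j j)) = 2 * A := by
      rw [double_sum_diff n i (fun x j => bv (S x x) * bv (S j j))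
            (fun x j => bv (S' x x) * bv (S' j j))
            (fun x j => mul_comm _ _) (fun x j => mul_comm _ _)
            (fun x j hxi hji => by show bv (S' x x) * bv (S' j j) = bv (S x x) * bv (S j j); rw [hx x x hxi, hx j j hji])]
      congr 1
      apply Finset.sum_congr rfl
      intro j hj
      rw [hS, hS', hx j j (Finset.mem_filter.mp hj).2]
      simp only [show bv true = (1:ℝ) from rfl, show bv false = (0:ℝ) from rfl]
      ring
    have t3 : (∑ x, ∑ j ∈ univ.filter (fun j => j ≠ x),
            bv (S' x x) * bv (S' j j) * bv (S' x j) * bv (S' j x))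
        - (∑ x, ∑ j ∈ univ.filter (fun j => j ≠ x),
            bv (S x x) * bv (S j j) * bv (S x j) * bv (S j x)) = 2 * B := by
      rw [double_sum_diff n i
            (fun x j => bv (S x x) * bv (S j j) * bv (S x j) * bv (S j x))
            (fun x j => bv (S' x x) * bv (S' j j) * bv (S' x j) * bv (S' j x))
            (fun x j => by show bv (S' x x) * bv (S' j j) * bv (S' x j) * bv (S' j x)
                              = bv (S' j j) * bv (S' x x) * bv (S' j x) * bv (S' x j); ring)
            (fun x j => by show bv (S x x) * bv (S j j) * bv (S x j) * bv (S j x)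
                              = bv (S j j) * bv (S x x) * bv (S j x) * bv (S x j); ring)
            (fun x j hxi hji => by
              show bv (S' x x) * bv (S' j j) * bv (S' x j) * bv (S' j x)
                  = bv (S x x) * bv (S j j) * bv (S x j) * bv (S j x)
              rw [hx x x hxi, hx j j hji, hx x j hxi, hx j x hji])]
      congr 1
      apply Finset.sum_congr rfl
      intro j hj
      have hji := (Finset.mem_filter.mp hj).2
      rw [hS, hS', hx j j hji, hy i j hji, hx j i hji]
      simp only [show bv true = (1:ℝ) from rfl, show bv false = (0:ℝ) from rfl]
      ring
    have t4 : (∑ x, ∑ j ∈ univ.filter (fun j => j ≠ x), bv (S' x j) * w x j)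
        = ∑ x, ∑ j ∈ univ.filter (fun j => j ≠ x), bv (S x j) * w x j := by
      apply Finset.sum_congr rfl
      intro x _
      apply Finset.sum_congr rfl
      intro j hj
      rw [hoff x j (Finset.mem_filter.mp hj).2]
    have t5 : (∑ x, ∑ j ∈ univ.filter (fun j => j ≠ x), bv (S' x j) * bv (S' j x))
        = ∑ x, ∑ j ∈ univ.filter (fun j => j ≠ x), bv (S x j) * bv (S j x) := by
      apply Finset.sum_congr rfl
      intro x _
      apply Finset.sum_congr rfl
      intro j hj
      have hjx := (Finset.mem_filter.mp hj).2
      rw [hoff x j hjx, hoff j x (Ne.symm hjx)]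
    have t6 : (∑ x, ∑ j ∈ univ.filter (fun j => j ≠ x),
            ∑ l ∈ univ.filter (fun l => l ≠ x ∧ l ≠ j), bv (S' x j) * bv (S' j l) * bv (S' l x))
        = ∑ x, ∑ j ∈ univ.filter (fun j => j ≠ x),
            ∑ l ∈ univ.filter (fun l => l ≠ x ∧ l ≠ j), bv (S x j) * bv (S j l) * bv (S l x) := by
      apply Finset.sum_congr rfl
      intro x _
      apply Finset.sum_congr rfl
      intro j hj
      have hjx := (Finset.mem_filter.mp hj).2
      apply Finset.sum_congr rfl
      intro l hl
      obtain ⟨hlx, hlj⟩ := (Finset.mem_filter.mp hl).2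
      rw [hoff x j hjx, hoff j l hlj, hoff l x (Ne.symm hlx)]
    rw [t1, t4, t5, t6, eq_add_of_sub_eq t2, eq_add_of_sub_eq t3]
    ring
  exact ⟨by rw [hpot, hpay], hpot⟩
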